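/- For any Jordan algebra laws φ₁, φ₂ on ℝⁿ, the plane spanned by φ₁ and φ₂ consists entirely of Jordan algebra laws (i.e. λφ₁ + μφ₂ satisfies the Jordan identity for all λ, μ ∈ ℝ) if and only if δ_{φ₁}φ₂ = 0 and δ_{φ₂}φ₁ = 0, where δ_{ψ}χ(x,y) = ψ(ψ(x,x),χ(x,y)) + ψ(χ(x,x),ψ(x,y)) + χ(ψ(x,x),ψ(x,y)) − χ(x,ψ(ψ(x,x),y)) − ψ(x,χ(ψ(x,x),y)) − ψ(x,ψ(χ(x,x),y)). -/

import Mathlib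

variable (n : ℕ)

def JordanLawN (n : ℕ) (φ : (Fin n → ℝ) → (Fin n → ℝ) → (Fin n → ℝ)) : Prop :=
  ∀ x y, φ (φ x x) (φ x y) = φ x (φ (φ x x) y)

def BilinLawN (n : ℕ) (φ : (Fin n → ℝ) → (Fin n → ℝ) → (Fin n → ℝ)) : Prop :=
  (∀ (a : ℝ) x y z, φ (a • x + y) z = a • φ x z + φ y z) ∧
  (∀ (a : ℝ) x y z, φ x (a • y + z) = a • φ x y + φ x z)

def SymmLawN (n : ℕ) (φ : (Fin n → ℝ) → (Fin n → ℝ) → (Fin n → ℝ)) : Prop :=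
  ∀ x y, φ x y = φ y x

/-- δ_{ψ}χ (x,y) = ψ(ψ(x,x),χ(x,y)) + ψ(χ(x,x),ψ(x,y)) + χ(ψ(x,x),ψ(x,y))
  − χ(x,ψ(ψ(x,x),y)) − ψ(x,χ(ψ(x,x),y)) − ψ(x,ψ(χ(x,x),y)). -/
def deltaN (n : ℕ) (ψ χ : (Fin n → ℝ) → (Fin n → ℝ) → (Fin n → ℝ))
    (x y : Fin n → ℝ) : Fin n → ℝ :=
  ψ (ψ x x) (χ x y) + ψ (χ x x) (ψ x y) + χ (ψ x x) (ψ x y)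
    - χ x (ψ (ψ x x) y) - ψ x (χ (ψ x x) y) - ψ x (ψ (χ x x) y)

theorem stmt_13 (φ₁ φ₂ : (Fin n → ℝ) → (Fin n → ℝ) → (Fin n → ℝ))
    (hb₁ : BilinLawN n φ₁) (hs₁ : SymmLawN n φ₁) (hj₁ : JordanLawN n φ₁)
    (hb₂ : BilinLawN n φ₂) (hs₂ : SymmLawN n φ₂) (hj₂ : JordanLawN n φ₂) :
    (∀ l m : ℝ, JordanLawN n (fun x y => l • φ₁ x y + m • φ₂ x y)) ↔
      ((∀ x y, deltaN n φ₁ φ₂ x y = 0) ∧ (∀ x y, deltaN n φ₂ φ₁ x y = 0)) := by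
  obtain ⟨h1l, h1r⟩ := hb₁
  obtain ⟨h2l, h2r⟩ := hb₂
  have z1l : ∀ z, φ₁ 0 z = 0 := fun z => by
    have h := h1l 1 0 0 z; simp only [one_smul, add_zero] at h
    exact (right_eq_add.mp h)
  have z1r : ∀ z, φ₁ z 0 = 0 := fun z => by
    have h := h1r 1 z 0 0; simp only [one_smul, add_zero] at h
    exact (right_eq_add.mp h)
  have z2l : ∀ z, φ₂ 0 z = 0 := fun z => by
    have h := h2l 1 0 0 z; simp only [one_smul, add_zero] at h
    exact (right_eq_add.mp h)
  have z2r : ∀ z, φ₂ z 0 = 0 := fun z => by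
    have h := h2r 1 z 0 0; simp only [one_smul, add_zero] at h
    exact (right_eq_add.mp h)
  have s1l : ∀ (a : ℝ) x z, φ₁ (a • x) z = a • φ₁ x z := fun a x z => by
    have h := h1l a x 0 z; rw [add_zero, z1l, add_zero] at h; exact h
  have s1r : ∀ (a : ℝ) x z, φ₁ x (a • z) = a • φ₁ x z := fun a x z => by
    have h := h1r a x z 0; rw [add_zero, z1r, add_zero] at h; exact h
  have s2l : ∀ (a : ℝ) x z, φ₂ (a • x) z = a • φ₂ x z := fun a x z => by
    have h := h2l a x 0 z; rw [add_zero, z2l, add_zero] at h; exact h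
  have s2r : ∀ (a : ℝ) x z, φ₂ x (a • z) = a • φ₂ x z := fun a x z => by
    have h := h2r a x z 0; rw [add_zero, z2r, add_zero] at h; exact h
  have a1l : ∀ x y z, φ₁ (x + y) z = φ₁ x z + φ₁ y z := fun x y z => by
    have h := h1l 1 x y z; rwa [one_smul, one_smul] at h
  have a1r : ∀ x y z, φ₁ x (y + z) = φ₁ x y + φ₁ x z := fun x y z => by
    have h := h1r 1 x y z; rwa [one_smul, one_smul] at h
  have a2l : ∀ x y z, φ₂ (x + y) z = φ₂ x z + φ₂ y z := fun x y z => by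
    have h := h2l 1 x y z; rwa [one_smul, one_smul] at h
  have a2r : ∀ x y z, φ₂ x (y + z) = φ₂ x y + φ₂ x z := fun x y z => by
    have h := h2r 1 x y z; rwa [one_smul, one_smul] at h
  have key : ∀ (l m : ℝ) (x y : Fin n → ℝ),
      (l • φ₁ (l • φ₁ x x + m • φ₂ x x) (l • φ₁ x y + m • φ₂ x y)
        + m • φ₂ (l • φ₁ x x + m • φ₂ x x) (l • φ₁ x y + m • φ₂ x y))
      - (l • φ₁ x (l • φ₁ (l • φ₁ x x + m • φ₂ x x) y + m • φ₂ (l • φ₁ x x + m • φ₂ x x) y)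
        + m • φ₂ x (l • φ₁ (l • φ₁ x x + m • φ₂ x x) y + m • φ₂ (l • φ₁ x x + m • φ₂ x x) y))
      = (l ^ 2 * m) • deltaN n φ₁ φ₂ x y + (l * m ^ 2) • deltaN n φ₂ φ₁ x y := by
    intro l m x y
    simp only [deltaN, a1l, a1r, a2l, a2r, s1l, s1r, s2l, s2r]
    rw [hj₁ x y, hj₂ x y]
    module
  constructor
  · intro h
    have H : ∀ (l m : ℝ) (x y : Fin n → ℝ),
        (l ^ 2 * m) • deltaN n φ₁ φ₂ x y + (l * m ^ 2) • deltaN n φ₂ φ₁ x y = 0 := by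
      intro l m x y
      have hh : (l • φ₁ (l • φ₁ x x + m • φ₂ x x) (l • φ₁ x y + m • φ₂ x y)
          + m • φ₂ (l • φ₁ x x + m • φ₂ x x) (l • φ₁ x y + m • φ₂ x y))
          = (l • φ₁ x (l • φ₁ (l • φ₁ x x + m • φ₂ x x) y + m • φ₂ (l • φ₁ x x + m • φ₂ x x) y)
          + m • φ₂ x (l • φ₁ (l • φ₁ x x + m • φ₂ x x) y + m • φ₂ (l • φ₁ x x + m • φ₂ x x) y)) :=
        h l m x y
      rw [← key l m x y, hh, sub_self]
    constructor <;> intro x y <;> funext i <;>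
    · have e1 := congrFun (H 1 1 x y) i
      have e2 := congrFun (H 1 (-1) x y) i
      simp only [Pi.add_apply, Pi.smul_apply, Pi.zero_apply, smul_eq_mul] at e1 e2 ⊢
      nlinarith [e1, e2]
  · rintro ⟨hd1, hd2⟩ l m x y
    have hk := key l m x y
    rw [hd1, hd2, smul_zero, smul_zero, add_zero] at hk
    exact sub_eq_zero.mp hk
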